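/- arXiv:2505.08549 — 2 statements merged into one kernel-verified Lean document; each statement's English description precedes it below -/
import Mathlib

section
/- Let p be a prime and f = a_0 + a_1 x + ... + a_n x^n ∈ ℤ[x] a primitive polynomial of degree n such that there exists an index ℓ with 1 ≤ ℓ + 1 ≤ n for which (i) p ∤ a_n, (ii) v_p(a_ℓ)/(n-ℓ) < v_p(a_i)/(n-i) for each i = 0, 1, ..., n-1 with i ≠ ℓ and a_i ≠ 0, and (iii) gcd(v_p(a_ℓ), n-ℓ) = 1. Then any nontrivial factorization f = f₁ f₂ in ℤ[x] has a factor of degree ≥ n - ℓ; in particular f has an irreducible factor of degree ≥ n - ℓ. -/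
open Polynomial

private def Cond (p d m : ℕ) (g : Polynomial ℤ) : Prop :=
  g ≠ 0 ∧ ¬ (p : ℤ) ∣ g.coeff g.natDegree ∧ d ≤ g.natDegree ∧
    g.coeff (g.natDegree - d) ≠ 0 ∧ padicValInt p (g.coeff (g.natDegree - d)) = m ∧
    ∀ i ∈ g.support, m * g.natDegree ≤ d * padicValInt p (g.coeff i) + m * i

private lemma not_pow_succ_dvd {p : ℕ} [Fact p.Prime] {a : ℤ} (ha : a ≠ 0) :
    ¬ (p : ℤ) ^ (padicValInt p a + 1) ∣ a := by
  rw [padicValInt_dvd_iff]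
  rintro (h | h)
  · exact ha h
  · omega

private lemma exists_min_idx (g : Polynomial ℤ) (hg : g ≠ 0) (w : ℕ → ℕ) :
    ∃ i₀ ∈ g.support, (∀ i ∈ g.support, w i₀ ≤ w i) ∧
      ∀ i ∈ g.support, i < i₀ → w i₀ < w i := by
  classical
  have hne : g.support.Nonempty := Polynomial.nonempty_support_iff.mpr hg
  have hex : ∃ i, i ∈ g.support ∧ ∀ k ∈ g.support, w i ≤ w k := by
    obtain ⟨i, hi, hmin⟩ := g.support.exists_min_image w hne
    exact ⟨i, hi, hmin⟩
  obtain ⟨hi₀, hmin⟩ := Nat.find_spec hex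
  refine ⟨Nat.find hex, hi₀, hmin, ?_⟩
  intro i hi hlt
  have hni := Nat.find_min hex hlt
  push_neg at hni
  obtain ⟨k, hk, hwk⟩ := hni hi
  exact lt_of_le_of_lt (hmin k hk) hwk

private lemma gauss_key (p d m : ℕ) [Fact p.Prime] (hd : 1 ≤ d) (g₁ g₂ : Polynomial ℤ)
    (h1 : g₁ ≠ 0) (h2 : g₂ ≠ 0) :
    ∃ i₀ ∈ g₁.support, ∃ j₀ ∈ g₂.support,
      (∀ i ∈ g₁.support, d * padicValInt p (g₁.coeff i₀) + m * i₀ ≤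
        d * padicValInt p (g₁.coeff i) + m * i) ∧
      (∀ j ∈ g₂.support, d * padicValInt p (g₂.coeff j₀) + m * j₀ ≤
        d * padicValInt p (g₂.coeff j) + m * j) ∧
      ¬ (p : ℤ) ^ (padicValInt p (g₁.coeff i₀) + padicValInt p (g₂.coeff j₀) + 1) ∣
        (g₁ * g₂).coeff (i₀ + j₀) := by
  obtain ⟨i₀, hi₀, hmin1, hstrict1⟩ :=
    exists_min_idx g₁ h1 (fun i => d * padicValInt p (g₁.coeff i) + m * i)
  obtain ⟨j₀, hj₀, hmin2, hstrict2⟩ :=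
    exists_min_idx g₂ h2 (fun j => d * padicValInt p (g₂.coeff j) + m * j)
  
  refine ⟨i₀, hi₀, j₀, hj₀, hmin1, hmin2, ?_⟩
  set t := padicValInt p (g₁.coeff i₀) + padicValInt p (g₂.coeff j₀) with ht
  have hb₀ : g₁.coeff i₀ ≠ 0 := Polynomial.mem_support_iff.mp hi₀
  have hc₀ : g₂.coeff j₀ ≠ 0 := Polynomial.mem_support_iff.mp hj₀
  intro hdvd
  rw [Polynomial.coeff_mul] at hdvd
  have hmem : (i₀, j₀) ∈ Finset.HasAntidiagonal.antidiagonal (i₀ + j₀) := by simp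
  rw [← Finset.add_sum_erase _ _ hmem] at hdvd
  have hrest : (p : ℤ) ^ (t + 1) ∣
      ∑ x ∈ (Finset.HasAntidiagonal.antidiagonal (i₀ + j₀)).erase (i₀, j₀), g₁.coeff x.1 * g₂.coeff x.2 := by
    apply Finset.dvd_sum
    intro x hx
    have hxne : x ≠ (i₀, j₀) := Finset.ne_of_mem_erase hx
    have hxad : x.1 + x.2 = i₀ + j₀ :=
      Finset.HasAntidiagonal.mem_antidiagonal.mp (Finset.mem_of_mem_erase hx)
    by_cases hz1 : g₁.coeff x.1 = 0
    · simp [hz1]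
    by_cases hz2 : g₂.coeff x.2 = 0
    · simp [hz2]
    have hx1 : x.1 ∈ g₁.support := Polynomial.mem_support_iff.mpr hz1
    have hx2 : x.2 ∈ g₂.support := Polynomial.mem_support_iff.mpr hz2
    set v₁ := padicValInt p (g₁.coeff x.1) with hv₁
    set v₂ := padicValInt p (g₂.coeff x.2) with hv₂
    have hkey : t + 1 ≤ v₁ + v₂ := by
      have hsm : m * i₀ + m * j₀ = m * x.1 + m * x.2 := by
        rw [← Nat.mul_add, ← Nat.mul_add, hxad]
      have hdlt : d * t < d * (v₁ + v₂) := by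
        rw [Nat.mul_add, Nat.mul_add]
        rcases lt_trichotomy x.1 i₀ with h | h | h
        · have hs := hstrict1 x.1 hx1 h
          have hm2 := hmin2 x.2 hx2
          linarith
        · exfalso; exact hxne (Prod.ext h.symm (by omega)).symm
        · have hjlt : x.2 < j₀ := by omega
          have hs := hstrict2 x.2 hx2 hjlt
          have hm1 := hmin1 x.1 hx1
          linarith
      have := Nat.lt_of_mul_lt_mul_left hdlt
      omega
    have : t + 1 ≤ padicValInt p (g₁.coeff x.1 * g₂.coeff x.2) := by
      rw [padicValInt.mul hz1 hz2]; exact hkey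
    exact (padicValInt_dvd_iff _ _).mpr (Or.inr this)
  have hmain : (p : ℤ) ^ (t + 1) ∣ g₁.coeff i₀ * g₂.coeff j₀ := by
    have := dvd_sub hdvd hrest
    simpa using this
  have : ¬ (p : ℤ) ^ (t + 1) ∣ g₁.coeff i₀ * g₂.coeff j₀ := by
    have hne : g₁.coeff i₀ * g₂.coeff j₀ ≠ 0 := mul_ne_zero hb₀ hc₀
    have hv : padicValInt p (g₁.coeff i₀ * g₂.coeff j₀) = t := padicValInt.mul hb₀ hc₀
    rw [← hv]
    exact not_pow_succ_dvd hne
  exact this hmain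

private lemma cond_step (p d m : ℕ) [Fact p.Prime] (hd : 1 ≤ d) (hcop : Nat.Coprime m d)
    (g₁ g₂ : Polynomial ℤ) (h1 : g₁ ≠ 0) (h2 : g₂ ≠ 0) (hC : Cond p d m (g₁ * g₂)) :
    Cond p d m g₁ ∨ Cond p d m g₂ := by
  obtain ⟨hg0, hlead, hdle, hc0, hcv, hw⟩ := hC
  set r₁ := g₁.natDegree with hr₁
  set r₂ := g₂.natDegree with hr₂
  have hdeg : (g₁ * g₂).natDegree = r₁ + r₂ := Polynomial.natDegree_mul h1 h2
  rw [hdeg] at hlead hdle hc0 hcv hw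
  have hlc : (g₁ * g₂).coeff (r₁ + r₂) = g₁.coeff r₁ * g₂.coeff r₂ :=
    Polynomial.coeff_mul_degree_add_degree g₁ g₂
  rw [hlc] at hlead
  have hl1 : ¬ (p : ℤ) ∣ g₁.coeff r₁ := fun h => hlead (h.mul_right _)
  have hl2 : ¬ (p : ℤ) ∣ g₂.coeff r₂ := fun h => hlead (h.mul_left _)
  have hv1 : padicValInt p (g₁.coeff r₁) = 0 := padicValInt.eq_zero_of_not_dvd hl1
  have hv2 : padicValInt p (g₂.coeff r₂) = 0 := padicValInt.eq_zero_of_not_dvd hl2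
  obtain ⟨i₀, hi₀, j₀, hj₀, hmin1, hmin2, hnd⟩ := gauss_key p d m hd g₁ g₂ h1 h2
  have hk0 : (g₁ * g₂).coeff (i₀ + j₀) ≠ 0 := fun h => hnd (by simp [h])
  have hwk := hw _ (Polynomial.mem_support_iff.mpr hk0)
  have hvk : padicValInt p ((g₁ * g₂).coeff (i₀ + j₀)) ≤
      padicValInt p (g₁.coeff i₀) + padicValInt p (g₂.coeff j₀) := by
    by_contra hlt
    push_neg at hlt
    exact hnd ((padicValInt_dvd_iff _ _).mpr (Or.inr (by omega)))
  have hr1supp : r₁ ∈ g₁.support := by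
    rw [Polynomial.mem_support_iff]
    exact fun h => hl1 (by rw [h]; exact dvd_zero _)
  have hr2supp : r₂ ∈ g₂.support := by
    rw [Polynomial.mem_support_iff]
    exact fun h => hl2 (by rw [h]; exact dvd_zero _)
  have hb1 : d * padicValInt p (g₁.coeff i₀) + m * i₀ ≤ m * r₁ := by
    have := hmin1 r₁ hr1supp
    rw [hv1] at this
    simpa using this
  have hb2 : d * padicValInt p (g₂.coeff j₀) + m * j₀ ≤ m * r₂ := by
    have := hmin2 r₂ hr2supp
    rw [hv2] at this
    simpa using this
  have hAB : m * r₁ + m * r₂ ≤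
      (d * padicValInt p (g₁.coeff i₀) + m * i₀) + (d * padicValInt p (g₂.coeff j₀) + m * j₀) := by
    have e1 : m * (r₁ + r₂) = m * r₁ + m * r₂ := Nat.mul_add m r₁ r₂
    have e2 : d * padicValInt p ((g₁ * g₂).coeff (i₀ + j₀)) ≤
        d * (padicValInt p (g₁.coeff i₀) + padicValInt p (g₂.coeff j₀)) :=
      Nat.mul_le_mul_left d hvk
    have e3 : m * (i₀ + j₀) = m * i₀ + m * j₀ := Nat.mul_add m i₀ j₀
    have e4 : d * (padicValInt p (g₁.coeff i₀) + padicValInt p (g₂.coeff j₀)) =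
        d * padicValInt p (g₁.coeff i₀) + d * padicValInt p (g₂.coeff j₀) := Nat.mul_add ..
    linarith
  have heq1 : d * padicValInt p (g₁.coeff i₀) + m * i₀ = m * r₁ := by linarith
  have heq2 : d * padicValInt p (g₂.coeff j₀) + m * j₀ = m * r₂ := by linarith
  have hw1 : ∀ i ∈ g₁.support, m * r₁ ≤ d * padicValInt p (g₁.coeff i) + m * i :=
    fun i hi => heq1 ▸ hmin1 i hi
  have hw2 : ∀ j ∈ g₂.support, m * r₂ ≤ d * padicValInt p (g₂.coeff j) + m * j :=
    fun j hj => heq2 ▸ hmin2 j hj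
  -- step D : look at coefficient r₁ + r₂ - d of the product
  have hℓnd : ¬ (p : ℤ) ^ (m + 1) ∣ (g₁ * g₂).coeff (r₁ + r₂ - d) := by
    rw [← hcv]
    exact not_pow_succ_dvd hc0
  have hterm : ∃ x ∈ Finset.HasAntidiagonal.antidiagonal (r₁ + r₂ - d),
      ¬ (p : ℤ) ^ (m + 1) ∣ g₁.coeff x.1 * g₂.coeff x.2 := by
    by_contra hall
    push_neg at hall
    exact hℓnd (by rw [Polynomial.coeff_mul]; exact Finset.dvd_sum hall)
  obtain ⟨⟨i, j⟩, hxad, hxnd⟩ := hterm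
  have hij : i + j = r₁ + r₂ - d := Finset.HasAntidiagonal.mem_antidiagonal.mp hxad
  have hbi : g₁.coeff i ≠ 0 := fun h => hxnd (by simp [h])
  have hcj : g₂.coeff j ≠ 0 := fun h => hxnd (by simp [h])
  set v₁ := padicValInt p (g₁.coeff i) with hvv₁
  set v₂ := padicValInt p (g₂.coeff j) with hvv₂
  have hvsum : v₁ + v₂ ≤ m := by
    by_contra hlt
    push_neg at hlt
    refine hxnd ((padicValInt_dvd_iff _ _).mpr (Or.inr ?_))
    rw [padicValInt.mul hbi hcj]
    omega
  have hi_le : i ≤ r₁ := Polynomial.le_natDegree_of_ne_zero hbi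
  have hj_le : j ≤ r₂ := Polynomial.le_natDegree_of_ne_zero hcj
  have hw1i : m * r₁ ≤ d * v₁ + m * i := hw1 i (Polynomial.mem_support_iff.mpr hbi)
  have hw2j : m * r₂ ≤ d * v₂ + m * j := hw2 j (Polynomial.mem_support_iff.mpr hcj)
  set x := r₁ - i with hx
  set y := r₂ - j with hy
  have hxy : x + y = d := by omega
  have e1 : m * r₁ = m * x + m * i := by rw [← Nat.mul_add]; congr 1; omega
  have e2 : m * r₂ = m * y + m * j := by rw [← Nat.mul_add]; congr 1; omega
  have hd1 : m * x ≤ d * v₁ := by linarith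
  have hd2 : m * y ≤ d * v₂ := by linarith
  have hup : d * v₁ + d * v₂ ≤ d * m := by
    have : d * (v₁ + v₂) ≤ d * m := Nat.mul_le_mul_left d hvsum
    linarith [Nat.mul_add d v₁ v₂]
  have hmd : m * x + m * y = d * m := by rw [← Nat.mul_add, hxy, Nat.mul_comm]
  have he1 : d * v₁ = m * x := by linarith
  have he2 : d * v₂ = m * y := by linarith
  have hdx : d ∣ x := hcop.symm.dvd_of_dvd_mul_left (he1 ▸ Dvd.intro v₁ rfl)
  have hdy : d ∣ y := hcop.symm.dvd_of_dvd_mul_left (he2 ▸ Dvd.intro v₂ rfl)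
  by_cases hx0 : x = 0
  · -- y = d : condition passes to g₂
    right
    have hyd : y = d := by omega
    have hjeq : r₂ - d = j := by omega
    have hv₂m : v₂ = m := by
      have : d * v₂ = d * m := by rw [he2, hyd, Nat.mul_comm]
      exact Nat.eq_of_mul_eq_mul_left (by omega) this
    exact ⟨h2, hl2, by omega, by rw [hjeq]; exact hcj, by rw [hjeq]; exact hv₂m, hw2⟩
  · -- x = d : condition passes to g₁
    left
    have hxd : x = d := by
      have := Nat.le_of_dvd (by omega) hdx
      omega
    have hieq : r₁ - d = i := by omega
    have hv₁m : v₁ = m := by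
      have : d * v₁ = d * m := by rw [he1, hxd, Nat.mul_comm]
      exact Nat.eq_of_mul_eq_mul_left (by omega) this
    exact ⟨h1, hl1, by omega, by rw [hieq]; exact hbi, by rw [hieq]; exact hv₁m, hw1⟩

private lemma cond_irred (p d m : ℕ) [Fact p.Prime] (hd : 1 ≤ d) (hcop : Nat.Coprime m d)
    (f : Polynomial ℤ) (hprim : f.IsPrimitive) :
    ∀ N g, g.natDegree ≤ N → g ∣ f → Cond p d m g →
      ∃ q, Irreducible q ∧ q ∣ f ∧ d ≤ q.natDegree := by
  intro N
  induction N with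
  | zero =>
    intro g hgN hgf hC
    have := hC.2.2.1
    omega
  | succ N ih =>
    intro g hgN hgf hC
    by_cases hirr : Irreducible g
    · exact ⟨g, hirr, hgf, hC.2.2.1⟩
    · have hgne : g ≠ 0 := hC.1
      have hdg : d ≤ g.natDegree := hC.2.2.1
      have hgu : ¬ IsUnit g := fun hu => by
        have := Polynomial.natDegree_eq_zero_of_isUnit hu
        omega
      rw [irreducible_iff] at hirr
      push_neg at hirr
      obtain ⟨a, b, hab, hau, hbu⟩ := hirr hgu
      have ha0 : a ≠ 0 := fun h => hgne (by rw [hab, h, zero_mul])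
      have hb0 : b ≠ 0 := fun h => hgne (by rw [hab, h, mul_zero])
      have haf : a ∣ f := dvd_trans ⟨b, hab⟩ hgf
      have hbf : b ∣ f := dvd_trans ⟨a, by rw [hab, mul_comm]⟩ hgf
      have hda : 1 ≤ a.natDegree := by
        by_contra h
        push_neg at h
        have h0 : a.natDegree = 0 := by omega
        have hac : a = C (a.coeff 0) := Polynomial.eq_C_of_natDegree_eq_zero h0
        exact hau (hac ▸ Polynomial.isUnit_C.mpr (hprim _ (by rw [← hac]; exact haf)))
      have hdb : 1 ≤ b.natDegree := by
        by_contra h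
        push_neg at h
        have h0 : b.natDegree = 0 := by omega
        have hbc : b = C (b.coeff 0) := Polynomial.eq_C_of_natDegree_eq_zero h0
        exact hbu (hbc ▸ Polynomial.isUnit_C.mpr (hprim _ (by rw [← hbc]; exact hbf)))
      have hdeg : g.natDegree = a.natDegree + b.natDegree := by
        rw [hab, Polynomial.natDegree_mul ha0 hb0]
      rcases cond_step p d m hd hcop a b ha0 hb0 (hab ▸ hC) with hCa | hCb
      · exact ih a (by omega) haf hCa
      · exact ih b (by omega) hbf hCb

/-- The case j = n of Theorem 1: any nontrivial factorization has a factor of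
degree ≥ n - ℓ; in particular f has an irreducible factor of degree ≥ n - ℓ. -/
theorem factor_degree_case_j_eq_n (p : ℕ) (hp : p.Prime) (f : Polynomial ℤ) (n : ℕ)
    (hn : f.natDegree = n) (hprim : f.IsPrimitive) (ℓ : ℕ) (hℓ : ℓ + 1 ≤ n)
    (h1 : ¬ (p : ℤ) ∣ f.coeff n)
    (h2 : ∀ i, i < n → i ≠ ℓ → f.coeff i ≠ 0 →
      padicValInt p (f.coeff ℓ) * (n - i) < padicValInt p (f.coeff i) * (n - ℓ))
    (h3 : Nat.gcd (padicValInt p (f.coeff ℓ)) (n - ℓ) = 1) :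
    (∀ f₁ f₂ : Polynomial ℤ, f = f₁ * f₂ → ¬ IsUnit f₁ → ¬ IsUnit f₂ →
      n - ℓ ≤ f₁.natDegree ∨ n - ℓ ≤ f₂.natDegree) ∧
    (∃ g : Polynomial ℤ, Irreducible g ∧ g ∣ f ∧ n - ℓ ≤ g.natDegree) := by
  haveI : Fact p.Prime := ⟨hp⟩
  have hfne : f ≠ 0 := fun h => h1 (by simp [h])
  have hdeg1 : ∀ g : Polynomial ℤ, g ∣ f → ¬ IsUnit g → 1 ≤ g.natDegree := by
    intro g hgf hgu
    by_contra h
    push_neg at h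
    have h0 : g.natDegree = 0 := by omega
    have hgc : g = C (g.coeff 0) := Polynomial.eq_C_of_natDegree_eq_zero h0
    exact hgu (hgc ▸ Polynomial.isUnit_C.mpr (hprim _ (by rw [← hgc]; exact hgf)))
  by_cases hc : f.coeff ℓ = 0
  · have hd1 : n - ℓ = 1 := by
      rw [hc] at h3
      simpa [padicValInt.zero] using h3
    constructor
    · intro f₁ f₂ heq hu1 hu2
      left
      rw [hd1]
      exact hdeg1 f₁ ⟨f₂, heq⟩ hu1
    · have hfu : ¬ IsUnit f := fun hu => by
        have := Polynomial.natDegree_eq_zero_of_isUnit hu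
        omega
      obtain ⟨q, hqi, hqd⟩ := WfDvdMonoid.exists_irreducible_factor hfu hfne
      exact ⟨q, hqi, hqd, by rw [hd1]; exact hdeg1 q hqd hqi.not_isUnit⟩
  · set m := padicValInt p (f.coeff ℓ) with hm
    set d := n - ℓ with hdd
    have hd : 1 ≤ d := by omega
    have hcop : Nat.Coprime m d := h3
    have hved : n - d = ℓ := by omega
    have hCf : Cond p d m f := by
      refine ⟨hfne, ?_, ?_, ?_, ?_, ?_⟩
      · rw [hn]; exact h1
      · rw [hn]; omega
      · rw [hn, hved]; exact hc
      · rw [hn, hved]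
      · intro i hi
        rw [hn]
        have hin : i ≤ n := hn ▸ Polynomial.le_natDegree_of_mem_supp i hi
        have hine : f.coeff i ≠ 0 := Polynomial.mem_support_iff.mp hi
        rcases eq_or_lt_of_le hin with heq | hlt
        · have hv : padicValInt p (f.coeff i) = 0 := by
            rw [heq]
            exact padicValInt.eq_zero_of_not_dvd h1
          rw [hv, heq]
          omega
        · by_cases hiℓ : i = ℓ
          · rw [hiℓ, ← hm]
            have e : m * d + m * ℓ = m * n := by rw [← Nat.mul_add]; congr 1; omega
            have e3 : d * m = m * d := Nat.mul_comm ..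
            omega
          · have hlt2 := h2 i hlt hiℓ hine
            have e : m * (n - i) + m * i = m * n := by rw [← Nat.mul_add]; congr 1; omega
            have e2 : padicValInt p (f.coeff i) * d = d * padicValInt p (f.coeff i) :=
              Nat.mul_comm ..
            omega
    constructor
    · intro f₁ f₂ heq hu1 hu2
      have h10 : f₁ ≠ 0 := fun h => hfne (by rw [heq, h, zero_mul])
      have h20 : f₂ ≠ 0 := fun h => hfne (by rw [heq, h, mul_zero])
      rcases cond_step p d m hd hcop f₁ f₂ h10 h20 (heq ▸ hCf) with h | h
      · exact Or.inl h.2.2.1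
      · exact Or.inr h.2.2.1
    · exact cond_irred p d m hd hcop f hprim f.natDegree f le_rfl dvd_rfl hCf
end

section
/- Let p be a prime, let f = a_0 + ... + a_n x^n ∈ ℤ[x] be primitive with indices j, ℓ satisfying 1 ≤ ℓ+1 ≤ j ≤ n, p ∤ a_j, v_p(a_ℓ)/(j-ℓ) < v_p(a_i)/(j-i) for all i < j with i ≠ ℓ and a_i ≠ 0, and gcd(v_p(a_ℓ), j-ℓ) = 1. Furthermore suppose each coefficient satisfies a_0 ≥ a_1 ≥ ... ≥ a_n ≥ 1 and f has no zero on the unit circle. If j = n and ℓ = 0, then f is irreducible in ℤ[x]; in general, any factorization of f in ℤ[x] has a factor of degree at least j - ℓ. -/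
open Polynomial Finset

private lemma pow_dvd_mul_of_le {p : ℕ} (hp : p.Prime) {x y : ℤ} {t : ℕ}
    (h : t ≤ padicValInt p x + padicValInt p y) : (p : ℤ) ^ t ∣ x * y := by
  haveI : Fact p.Prime := ⟨hp⟩
  rcases eq_or_ne x 0 with rfl | hx
  · simp
  rcases eq_or_ne y 0 with rfl | hy
  · simp
  calc (p:ℤ)^t ∣ (p:ℤ)^(padicValInt p x + padicValInt p y) := pow_dvd_pow _ h
    _ ∣ x * y := by
      rw [pow_add]
      exact mul_dvd_mul (padicValInt_dvd x) (padicValInt_dvd y)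

private lemma exists_minmax (p k w : ℕ) (g : Polynomial ℤ) (hg : g ≠ 0) :
    ∃ (N : ℤ) (m M : ℕ), m ∈ g.support ∧ M ∈ g.support ∧ m ≤ M ∧
      ((k:ℤ) * padicValInt p (g.coeff m) + w * m = N) ∧
      ((k:ℤ) * padicValInt p (g.coeff M) + w * M = N) ∧
      (∀ a ∈ g.support, N ≤ (k:ℤ) * padicValInt p (g.coeff a) + w * a) ∧
      (∀ a ∈ g.support, a < m → N < (k:ℤ) * padicValInt p (g.coeff a) + w * a) ∧
      (∀ a ∈ g.support, M < a → N < (k:ℤ) * padicValInt p (g.coeff a) + w * a) := by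
  classical
  set F : ℕ → ℤ := fun i => (k:ℤ) * padicValInt p (g.coeff i) + w * i with hF
  have hne : g.support.Nonempty := Polynomial.nonempty_support_iff.mpr hg
  set N := g.support.inf' hne F with hN
  set S := g.support.filter (fun i => F i = N) with hS
  have hSne : S.Nonempty := by
    obtain ⟨i, hi, hiv⟩ := Finset.exists_mem_eq_inf' hne F
    exact ⟨i, by simp [hS, hi, hiv.symm, hN]⟩
  have hSsub : ∀ x ∈ S, x ∈ g.support ∧ F x = N := by
    intro x hx; simpa [hS] using hx
  obtain ⟨hm1, hm2⟩ := hSsub _ (S.min'_mem hSne)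
  obtain ⟨hM1, hM2⟩ := hSsub _ (S.max'_mem hSne)
  refine ⟨N, S.min' hSne, S.max' hSne, hm1, hM1, S.min'_le _ (S.max'_mem hSne), hm2, hM2,
    fun a ha => Finset.inf'_le _ ha, ?_, ?_⟩
  · intro a ha hlt
    refine lt_of_le_of_ne (Finset.inf'_le _ ha) fun hEq => ?_
    have haS : a ∈ S := by simp only [hS, Finset.mem_filter]; exact ⟨ha, hEq.symm⟩
    exact absurd (S.min'_le _ haS) (by omega)
  · intro a ha hlt
    refine lt_of_le_of_ne (Finset.inf'_le _ ha) fun hEq => ?_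
    have haS : a ∈ S := by simp only [hS, Finset.mem_filter]; exact ⟨ha, hEq.symm⟩
    exact absurd (S.le_max' _ haS) (by omega)
private lemma main_aux (p : ℕ) (hp : p.Prime) (f g h : Polynomial ℤ) (hf : f = g * h)
    (hg : g ≠ 0) (hh : h ≠ 0) (j ℓ : ℕ) (hℓj : ℓ + 1 ≤ j)
    (h1 : ¬ (p : ℤ) ∣ f.coeff j)
    (h2 : ∀ i, i < j → i ≠ ℓ → f.coeff i ≠ 0 →
      padicValInt p (f.coeff ℓ) * (j - i) < padicValInt p (f.coeff i) * (j - ℓ))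
    (h3 : Nat.gcd (padicValInt p (f.coeff ℓ)) (j - ℓ) = 1)
    (hℓ0 : f.coeff ℓ ≠ 0) :
    j - ℓ ≤ g.natDegree ∨ j - ℓ ≤ h.natDegree := by
  classical
  haveI : Fact p.Prime := ⟨hp⟩
  set k : ℕ := j - ℓ with hk
  set w : ℕ := padicValInt p (f.coeff ℓ) with hw
  have hkpos : 0 < k := by omega
  have hkz : (k:ℤ) = (j:ℤ) - (ℓ:ℤ) := by omega
  have hvj : padicValInt p (f.coeff j) = 0 := padicValInt.eq_zero_of_not_dvd h1
  have hfmin : ∀ i, f.coeff i ≠ 0 →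
      (w:ℤ) * j ≤ (k:ℤ) * padicValInt p (f.coeff i) + (w:ℤ) * i := by
    intro i hi0
    rcases lt_trichotomy i j with hij | heq | hij
    · rcases eq_or_ne i ℓ with heq | hiℓ
      · rw [heq, ← hw]
        have e : (k:ℤ) * w = (w:ℤ) * j - (w:ℤ) * ℓ := by rw [hkz]; ring
        linarith
      · have h2' := h2 i hij hiℓ hi0
        have h2'' : (w:ℤ) * ((j:ℤ) - i) < (padicValInt p (f.coeff i) : ℤ) * (k:ℤ) := by
          zify [hij.le] at h2'
          exact h2'
        have e1 : (w:ℤ) * ((j:ℤ) - i) = (w:ℤ) * j - (w:ℤ) * i := by ring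
        have e2 : (padicValInt p (f.coeff i) : ℤ) * (k:ℤ)
            = (k:ℤ) * padicValInt p (f.coeff i) := by ring
        have e3 : (k:ℤ) * padicValInt p (f.coeff i) ≤ (k:ℤ) * padicValInt p (f.coeff i) := le_refl _
        linarith
    · subst heq
      rw [hvj]
      push_cast
      linarith
    · have h0 : (0:ℤ) ≤ (k:ℤ) * padicValInt p (f.coeff i) := by positivity
      have h1' : (w:ℤ) * j ≤ (w:ℤ) * i := by
        have : (j:ℤ) ≤ i := by exact_mod_cast hij.le
        exact mul_le_mul_of_nonneg_left this (by positivity)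
      linarith
  obtain ⟨N₁, m₁, M₁, hm₁s, hM₁s, hmM₁, hm₁v, hM₁v, hmin₁, hstrm₁, hstrM₁⟩ :=
    exists_minmax p k w g hg
  obtain ⟨N₂, m₂, M₂, hm₂s, hM₂s, hmM₂, hm₂v, hM₂v, hmin₂, hstrm₂, hstrM₂⟩ :=
    exists_minmax p k w h hh
  set s : ℕ := padicValInt p (g.coeff m₁) + padicValInt p (h.coeff m₂) with hs
  have hseq : (k:ℤ) * s + (w:ℤ) * m₁ + (w:ℤ) * m₂ = N₁ + N₂ := by
    rw [hs]; push_cast; linarith [hm₁v, hm₂v]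
  have claim1 : ¬ (p:ℤ)^(s+1) ∣ f.coeff (m₁ + m₂) := by
    rw [hf, coeff_mul]
    have hpair : ((m₁, m₂) : ℕ × ℕ) ∈ antidiagonal (m₁ + m₂) := by
      simp [Finset.mem_antidiagonal]
    rw [← Finset.add_sum_erase _ _ hpair]
    intro hdvd
    have hrest : (p:ℤ)^(s+1) ∣
        ∑ x ∈ (antidiagonal (m₁ + m₂)).erase (m₁, m₂), g.coeff x.1 * h.coeff x.2 := by
      refine Finset.dvd_sum fun x hx => ?_
      have hxa : x.1 + x.2 = m₁ + m₂ := Finset.HasAntidiagonal.mem_antidiagonal.mp (Finset.mem_of_mem_erase hx)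
      have hxne : x ≠ (m₁, m₂) := Finset.ne_of_mem_erase hx
      rcases eq_or_ne (g.coeff x.1) 0 with hx1 | hx1
      · simp [hx1]
      rcases eq_or_ne (h.coeff x.2) 0 with hx2 | hx2
      · simp [hx2]
      have hx1s : x.1 ∈ g.support := mem_support_iff.mpr hx1
      have hx2s : x.2 ∈ h.support := mem_support_iff.mpr hx2
      refine pow_dvd_mul_of_le hp ?_
      have hxz : (x.1:ℤ) + (x.2:ℤ) = (m₁:ℤ) + (m₂:ℤ) := by exact_mod_cast hxa
      have hxw : (w:ℤ) * x.1 + (w:ℤ) * x.2 = (w:ℤ) * m₁ + (w:ℤ) * m₂ := by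
        rw [← mul_add, ← mul_add, hxz]
      have hkey : (k:ℤ) * s <
          (k:ℤ) * padicValInt p (g.coeff x.1) + (k:ℤ) * padicValInt p (h.coeff x.2) := by
        rcases lt_trichotomy x.1 m₁ with hlt | heq | hgt
        · have hstr := hstrm₁ x.1 hx1s hlt
          have hge := hmin₂ x.2 hx2s
          linarith
        · exfalso; exact hxne (Prod.ext heq (by omega))
        · have hlt2 : x.2 < m₂ := by omega
          have hstr := hstrm₂ x.2 hx2s hlt2
          have hge := hmin₁ x.1 hx1s
          linarith
      have hlt' : (s:ℤ) <
          (padicValInt p (g.coeff x.1) : ℤ) + (padicValInt p (h.coeff x.2) : ℤ) :=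
        lt_of_mul_lt_mul_left (by rw [mul_add]; exact hkey) (by positivity)
      have : s < padicValInt p (g.coeff x.1) + padicValInt p (h.coeff x.2) := by
        exact_mod_cast hlt'
      omega
    have hmain : (p:ℤ)^(s+1) ∣ g.coeff m₁ * h.coeff m₂ := by
      simpa using dvd_sub hdvd hrest
    have hne0 : g.coeff m₁ * h.coeff m₂ ≠ 0 :=
      mul_ne_zero (mem_support_iff.mp hm₁s) (mem_support_iff.mp hm₂s)
    rcases (padicValInt_dvd_iff _ _).mp hmain with h0 | hle
    · exact hne0 h0
    · rw [padicValInt.mul (mem_support_iff.mp hm₁s) (mem_support_iff.mp hm₂s), ← hs] at hle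
      omega
  have hfi0 : f.coeff (m₁ + m₂) ≠ 0 := fun h0 => claim1 (by rw [h0]; exact dvd_zero _)
  have hvle : padicValInt p (f.coeff (m₁ + m₂)) ≤ s := by
    by_contra hlt
    exact claim1 ((pow_dvd_pow _ (by omega)).trans (padicValInt_dvd _))
  have claimT : (w:ℤ) * j ≤ N₁ + N₂ := by
    have hmin := hfmin (m₁ + m₂) hfi0
    have hmul : (k:ℤ) * padicValInt p (f.coeff (m₁ + m₂)) ≤ (k:ℤ) * s :=
      mul_le_mul_of_nonneg_left (by exact_mod_cast hvle) (by positivity)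
    push_cast at hmin
    rw [mul_add] at hmin
    linarith [hseq]
  have claim2 : m₁ + m₂ ≤ ℓ := by
    by_contra hc
    push_neg at hc
    have hdvd : (p:ℤ)^(w+1) ∣ f.coeff ℓ := by
      rw [hf, coeff_mul]
      refine Finset.dvd_sum fun x hx => ?_
      have hxa : x.1 + x.2 = ℓ := Finset.HasAntidiagonal.mem_antidiagonal.mp hx
      rcases eq_or_ne (g.coeff x.1) 0 with hx1 | hx1
      · simp [hx1]
      rcases eq_or_ne (h.coeff x.2) 0 with hx2 | hx2
      · simp [hx2]
      have hx1s : x.1 ∈ g.support := mem_support_iff.mpr hx1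
      have hx2s : x.2 ∈ h.support := mem_support_iff.mpr hx2
      refine pow_dvd_mul_of_le hp ?_
      have hxz : (x.1:ℤ) + (x.2:ℤ) = (ℓ:ℤ) := by exact_mod_cast hxa
      have hxw : (w:ℤ) * x.1 + (w:ℤ) * x.2 = (w:ℤ) * ℓ := by
        rw [← mul_add, hxz]
      have hwk : (w:ℤ) * k = (w:ℤ) * j - (w:ℤ) * ℓ := by rw [hkz]; ring
      have hsum : N₁ + N₂ <
          (k:ℤ) * padicValInt p (g.coeff x.1) + (k:ℤ) * padicValInt p (h.coeff x.2)
            + (w:ℤ) * x.1 + (w:ℤ) * x.2 := by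
        rcases (by omega : x.1 < m₁ ∨ x.2 < m₂) with hlt | hlt
        · have hstr := hstrm₁ x.1 hx1s hlt
          have hge := hmin₂ x.2 hx2s
          linarith
        · have hstr := hstrm₂ x.2 hx2s hlt
          have hge := hmin₁ x.1 hx1s
          linarith
      have hkey : (k:ℤ) * w <
          (k:ℤ) * padicValInt p (g.coeff x.1) + (k:ℤ) * padicValInt p (h.coeff x.2) := by
        linarith
      have hlt' : (w:ℤ) <
          (padicValInt p (g.coeff x.1) : ℤ) + (padicValInt p (h.coeff x.2) : ℤ) :=
        lt_of_mul_lt_mul_left (by rw [mul_add]; exact hkey) (by positivity)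
      have : w < padicValInt p (g.coeff x.1) + padicValInt p (h.coeff x.2) := by
        exact_mod_cast hlt'
      omega
    rcases (padicValInt_dvd_iff _ _).mp hdvd with h0 | hle
    · exact hℓ0 h0
    · rw [← hw] at hle; omega
  have claim3 : j ≤ M₁ + M₂ := by
    by_contra hc
    push_neg at hc
    apply h1
    have hdvd : (p:ℤ)^1 ∣ f.coeff j := by
      rw [hf, coeff_mul]
      refine Finset.dvd_sum fun x hx => ?_
      have hxa : x.1 + x.2 = j := Finset.HasAntidiagonal.mem_antidiagonal.mp hx
      rcases eq_or_ne (g.coeff x.1) 0 with hx1 | hx1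
      · simp [hx1]
      rcases eq_or_ne (h.coeff x.2) 0 with hx2 | hx2
      · simp [hx2]
      have hx1s : x.1 ∈ g.support := mem_support_iff.mpr hx1
      have hx2s : x.2 ∈ h.support := mem_support_iff.mpr hx2
      refine pow_dvd_mul_of_le hp ?_
      have hxz : (x.1:ℤ) + (x.2:ℤ) = (j:ℤ) := by exact_mod_cast hxa
      have hxw : (w:ℤ) * x.1 + (w:ℤ) * x.2 = (w:ℤ) * j := by
        rw [← mul_add, hxz]
      have hsum : N₁ + N₂ <
          (k:ℤ) * padicValInt p (g.coeff x.1) + (k:ℤ) * padicValInt p (h.coeff x.2)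
            + (w:ℤ) * x.1 + (w:ℤ) * x.2 := by
        rcases (by omega : M₁ < x.1 ∨ M₂ < x.2) with hlt | hlt
        · have hstr := hstrM₁ x.1 hx1s hlt
          have hge := hmin₂ x.2 hx2s
          linarith
        · have hstr := hstrM₂ x.2 hx2s hlt
          have hge := hmin₁ x.1 hx1s
          linarith
      by_contra hcon
      have h00 : padicValInt p (g.coeff x.1) = 0 ∧ padicValInt p (h.coeff x.2) = 0 := by
        omega
      rw [h00.1, h00.2] at hsum
      push_cast at hsum
      linarith [claimT]
    simpa using hdvd
  have hdvd₁ : (k:ℤ) ∣ (w:ℤ) * ((M₁:ℤ) - (m₁:ℤ)) := by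
    refine ⟨(padicValInt p (g.coeff m₁) : ℤ) - (padicValInt p (g.coeff M₁) : ℤ), ?_⟩
    rw [mul_sub, mul_sub]
    linarith [hm₁v, hM₁v]
  have hdvd₂ : (k:ℤ) ∣ (w:ℤ) * ((M₂:ℤ) - (m₂:ℤ)) := by
    refine ⟨(padicValInt p (h.coeff m₂) : ℤ) - (padicValInt p (h.coeff M₂) : ℤ), ?_⟩
    rw [mul_sub, mul_sub]
    linarith [hm₂v, hM₂v]
  have hco : IsCoprime (k:ℤ) (w:ℤ) := by
    rw [Int.isCoprime_iff_gcd_eq_one]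
    simpa [Int.gcd_natCast_natCast, Nat.gcd_comm] using h3
  have hd₁ : k ∣ M₁ - m₁ := by
    have := hco.dvd_of_dvd_mul_left hdvd₁
    have h' : (k:ℤ) ∣ ((M₁ - m₁ : ℕ) : ℤ) := by
      have e : ((M₁ - m₁ : ℕ) : ℤ) = (M₁:ℤ) - (m₁:ℤ) := by omega
      rw [e]; exact this
    exact_mod_cast h'
  have hd₂ : k ∣ M₂ - m₂ := by
    have := hco.dvd_of_dvd_mul_left hdvd₂
    have h' : (k:ℤ) ∣ ((M₂ - m₂ : ℕ) : ℤ) := by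
      have e : ((M₂ - m₂ : ℕ) : ℤ) = (M₂:ℤ) - (m₂:ℤ) := by omega
      rw [e]; exact this
    exact_mod_cast h'
  have hsum : k ≤ (M₁ - m₁) + (M₂ - m₂) := by omega
  have hcase : k ≤ M₁ - m₁ ∨ k ≤ M₂ - m₂ := by
    rcases Nat.eq_zero_or_pos (M₁ - m₁) with h0 | hpos
    · right; exact Nat.le_of_dvd (by omega) hd₂
    · left; exact Nat.le_of_dvd hpos hd₁
  rcases hcase with hcase | hcase
  · left
    have := Polynomial.le_natDegree_of_ne_zero (mem_support_iff.mp hM₁s)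
    omega
  · right
    have := Polynomial.le_natDegree_of_ne_zero (mem_support_iff.mp hM₂s)
    omega
/-- Theorem 1 combined with Remark (3): under the Dumas-type conditions together
with decreasing positive coefficients and no zero on the unit circle, f is
irreducible when j = n and ℓ = 0, and in general any factorization has a factor
of degree at least j - ℓ. -/
theorem dumas_with_monotone_coefficients (p : ℕ) (hp : p.Prime) (f : Polynomial ℤ) (n : ℕ)
    (hn : f.natDegree = n) (hprim : f.IsPrimitive) (j ℓ : ℕ)
    (hℓj : ℓ + 1 ≤ j) (hjn : j ≤ n)
    (h1 : ¬ (p : ℤ) ∣ f.coeff j)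
    (h2 : ∀ i, i < j → i ≠ ℓ → f.coeff i ≠ 0 →
      padicValInt p (f.coeff ℓ) * (j - i) < padicValInt p (f.coeff i) * (j - ℓ))
    (h3 : Nat.gcd (padicValInt p (f.coeff ℓ)) (j - ℓ) = 1)
    (hmono : ∀ i, i < n → f.coeff (i + 1) ≤ f.coeff i)
    (hlead : 1 ≤ f.coeff n)
    (hcircle : ∀ θ : ℂ, Polynomial.aeval θ f = 0 → ‖θ‖ ≠ 1) :
    (j = n ∧ ℓ = 0 → Irreducible f) ∧
    (∀ f₁ f₂ : Polynomial ℤ, f = f₁ * f₂ →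
      j - ℓ ≤ f₁.natDegree ∨ j - ℓ ≤ f₂.natDegree) := by
  have hposaux : ∀ d, 1 ≤ f.coeff (n - d) := by
    intro d
    induction d with
    | zero => simpa using hlead
    | succ d ih =>
      rcases le_or_gt n d with hd | hd
      · have e : n - (d + 1) = n - d := by omega
        rw [e]; exact ih
      · have e : n - (d + 1) + 1 = n - d := by omega
        have hm := hmono (n - (d + 1)) (by omega)
        rw [e] at hm
        exact le_trans ih hm
  have hpos : ∀ i, i ≤ n → 1 ≤ f.coeff i := by
    intro i hi
    have e : i = n - (n - i) := by omega
    rw [e]; exact hposaux (n - i)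
  have hℓ0 : f.coeff ℓ ≠ 0 := by
    have := hpos ℓ (by omega); omega
  have hf0 : f ≠ 0 := fun h0 => hℓ0 (by rw [h0]; simp)
  have main : ∀ f₁ f₂ : Polynomial ℤ, f = f₁ * f₂ →
      j - ℓ ≤ f₁.natDegree ∨ j - ℓ ≤ f₂.natDegree := by
    intro f₁ f₂ heq
    have hf₁ : f₁ ≠ 0 := fun h0 => hf0 (by rw [heq, h0, zero_mul])
    have hf₂ : f₂ ≠ 0 := fun h0 => hf0 (by rw [heq, h0, mul_zero])
    exact main_aux p hp f f₁ f₂ heq hf₁ hf₂ j ℓ hℓj h1 h2 h3 hℓ0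
  refine ⟨?_, main⟩
  rintro ⟨rfl, rfl⟩
  constructor
  · intro hu
    have := Polynomial.natDegree_eq_zero_of_isUnit hu
    omega
  · intro a b hab
    have ha : a ≠ 0 := fun h0 => hf0 (by rw [hab, h0, zero_mul])
    have hb : b ≠ 0 := fun h0 => hf0 (by rw [hab, h0, mul_zero])
    have hdeg : a.natDegree + b.natDegree = j := by
      rw [← hn, hab, Polynomial.natDegree_mul ha hb]
    rcases main a b hab with hc | hc
    · right
      have hb0 : b.natDegree = 0 := by omega
      have hbC := Polynomial.eq_C_of_natDegree_eq_zero hb0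
      have : IsUnit (b.coeff 0) := by
        apply hprim
        rw [← hbC, hab]
        exact ⟨a, mul_comm a b⟩
      rw [hbC]
      exact this.map Polynomial.C
    · left
      have ha0 : a.natDegree = 0 := by omega
      have haC := Polynomial.eq_C_of_natDegree_eq_zero ha0
      have : IsUnit (a.coeff 0) := by
        apply hprim
        rw [← haC, hab]
        exact ⟨b, rfl⟩
      rw [haC]
      exact this.map Polynomial.C
end
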